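/- Let Σ_M⁻¹ = I + (1/σ²) Σ_{m=1}^{M} v_m v_mᵀ where each v_m ∈ ℝⁿ satisfies ‖v_m‖ ≤ 1 and σ > 0. Then det(Σ_M⁻¹) ≤ (1 + M/(n σ²))ⁿ. -/

import Mathlib

open Matrix Finset

lemma vecMulVec_posSemidef {n : ℕ} (w : Fin n → ℝ) :
    (vecMulVec w w).PosSemidef := by
  rw [posSemidef_iff_dotProduct_mulVec]
  constructor
  · ext i j
    simp [vecMulVec_apply, conjTranspose_apply, mul_comm]
  · intro x
    have : (vecMulVec w w) *ᵥ x = (w ⬝ᵥ x) • w := by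
      ext i
      simp [mulVec, vecMulVec_apply, dotProduct, Finset.sum_mul, Finset.mul_sum,
        mul_comm, mul_left_comm]
    rw [this]
    have : star x ⬝ᵥ ((w ⬝ᵥ x) • w) = (w ⬝ᵥ x) * (x ⬝ᵥ w) := by
      simp [dotProduct_smul, star_trivial, dotProduct_comm, mul_comm]
    rw [this, dotProduct_comm x w]
    exact mul_self_nonneg _

lemma smul_posSemidef {n : ℕ} {A : Matrix (Fin n) (Fin n) ℝ} (hA : A.PosSemidef)
    {c : ℝ} (hc : 0 ≤ c) : (c • A).PosSemidef := by
  rw [posSemidef_iff_dotProduct_mulVec]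
  constructor
  · show (c • A)ᴴ = c • A
    rw [conjTranspose_smul, hA.1, star_trivial]
  · intro x
    rw [smul_mulVec, dotProduct_smul]
    exact mul_nonneg hc (hA.dotProduct_mulVec_nonneg x)

lemma sum_posSemidef {n : ℕ} {ι : Type*} (s : Finset ι) (f : ι → Matrix (Fin n) (Fin n) ℝ)
    (hf : ∀ i ∈ s, (f i).PosSemidef) : (∑ i ∈ s, f i).PosSemidef := by
  classical
  induction s using Finset.induction_on with
  | empty => simpa using Matrix.PosSemidef.zero
  | insert _ _ h ih =>
    rw [Finset.sum_insert h]
    exact (hf _ (Finset.mem_insert_self _ _)).add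
      (ih fun i hi => hf i (Finset.mem_insert_of_mem hi))

lemma trace_eq_sum_eigenvalues {n : ℕ} {A : Matrix (Fin n) (Fin n) ℝ}
    (hA : A.IsHermitian) : A.trace = ∑ i, hA.eigenvalues i := by
  rw [hA.trace_eq_sum_eigenvalues]
  simp

lemma amgm_prod_le {n : ℕ} (hn : 0 < n) (z : Fin n → ℝ) (hz : ∀ i, 0 ≤ z i) :
    ∏ i, z i ≤ ((∑ i, z i) / n) ^ n := by
  have hn' : (0 : ℝ) < n := by exact_mod_cast hn
  have h := Real.geom_mean_le_arith_mean_weighted Finset.univ (fun _ => (n : ℝ)⁻¹) z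
    (fun i _ => by positivity)
    (by simp [Finset.sum_const]; field_simp)
    (fun i _ => hz i)
  have hprod : ∏ i, z i ^ ((n : ℝ)⁻¹) = (∏ i, z i) ^ ((n : ℝ)⁻¹) := by
    rw [← Real.finset_prod_rpow _ _ (fun i _ => hz i)]
  have hsum : ∑ i : Fin n, (n : ℝ)⁻¹ * z i = (∑ i, z i) / n := by
    rw [← Finset.mul_sum]; ring
  rw [hprod, hsum] at h
  have hP : (0 : ℝ) ≤ ∏ i, z i := Finset.prod_nonneg fun i _ => hz i
  calc ∏ i, z i = ((∏ i, z i) ^ ((n : ℝ)⁻¹)) ^ (n : ℕ) := by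
        rw [← Real.rpow_natCast ((∏ i, z i) ^ ((n : ℝ)⁻¹)) n, ← Real.rpow_mul hP,
          inv_mul_cancel₀ (ne_of_gt hn'), Real.rpow_one]
    _ ≤ ((∑ i, z i) / n) ^ n := pow_le_pow_left₀ (Real.rpow_nonneg hP _) h n

/-- If `Σ_M⁻¹ = I + (1/σ²) Σ_m v_m v_mᵀ` with each `‖v_m‖ ≤ 1` (Euclidean norm) and `σ > 0`,
then `det (Σ_M⁻¹) ≤ (1 + M/(n σ²))ⁿ`. -/
theorem det_bound_rank_one_sum {n : ℕ} (hn : 0 < n) (σ : ℝ) (hσ : 0 < σ)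
    (M : ℕ) (v : ℕ → (Fin n → ℝ))
    (hv : ∀ m, Real.sqrt (∑ i, (v m i) ^ 2) ≤ 1) :
    ((1 : Matrix (Fin n) (Fin n) ℝ) +
        (σ ^ 2)⁻¹ • ∑ m ∈ Finset.range M, vecMulVec (v m) (v m)).det ≤
      (1 + (M : ℝ) / (n * σ ^ 2)) ^ n := by
  set A : Matrix (Fin n) (Fin n) ℝ :=
    (1 : Matrix (Fin n) (Fin n) ℝ) +
      (σ ^ 2)⁻¹ • ∑ m ∈ Finset.range M, vecMulVec (v m) (v m) with hAdef
  have hc : (0:ℝ) ≤ (σ ^ 2)⁻¹ := by positivity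
  have hA : A.PosSemidef :=
    Matrix.PosSemidef.one.add (smul_posSemidef
      (sum_posSemidef _ _ fun m _ => vecMulVec_posSemidef (v m)) hc)
  have hH := hA.1
  -- norm bound
  have hnorm : ∀ m, ∑ i, (v m i) ^ 2 ≤ 1 := by
    intro m
    have h0 : (0:ℝ) ≤ ∑ i, (v m i) ^ 2 := Finset.sum_nonneg fun i _ => sq_nonneg _
    have := hv m
    nlinarith [Real.sq_sqrt h0, Real.sqrt_nonneg (∑ i, (v m i) ^ 2)]
  -- trace bound
  have htrace : A.trace ≤ n + (σ ^ 2)⁻¹ * M := by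
    have h1 : A.trace = n + (σ ^ 2)⁻¹ * ∑ m ∈ Finset.range M, ∑ i, (v m i) ^ 2 := by
      rw [hAdef, trace_add, trace_smul, trace_one, trace_sum]
      simp only [smul_eq_mul]
      congr 2
      · simp
      · refine Finset.sum_congr rfl fun m _ => ?_
        simp [Matrix.trace, Matrix.diag, vecMulVec_apply, sq]
    rw [h1]
    have : ∑ m ∈ Finset.range M, ∑ i, (v m i) ^ 2 ≤ M := by
      calc ∑ m ∈ Finset.range M, ∑ i, (v m i) ^ 2 ≤ ∑ m ∈ Finset.range M, 1 :=
            Finset.sum_le_sum fun m _ => hnorm m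
        _ = M := by simp
    nlinarith
  have hdet : A.det = ∏ i, hH.eigenvalues i := by
    have := hH.det_eq_prod_eigenvalues
    simpa using this
  have hsum : ∑ i, hH.eigenvalues i = A.trace := (trace_eq_sum_eigenvalues hH).symm
  have hev : ∀ i, 0 ≤ hH.eigenvalues i := hA.eigenvalues_nonneg
  have hn' : (0:ℝ) < n := by exact_mod_cast hn
  calc A.det = ∏ i, hH.eigenvalues i := hdet
    _ ≤ ((∑ i, hH.eigenvalues i) / n) ^ n := amgm_prod_le hn _ hev
    _ ≤ (1 + (M : ℝ) / (n * σ ^ 2)) ^ n := by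
        apply pow_le_pow_left₀
        · exact div_nonneg (Finset.sum_nonneg fun i _ => hev i) (le_of_lt hn')
        · rw [hsum]
          rw [div_le_iff₀ hn']
          have hM0 : (0:ℝ) ≤ (M:ℝ) := Nat.cast_nonneg M
          have : (1 + (M : ℝ) / (n * σ ^ 2)) * n = n + (σ ^ 2)⁻¹ * M := by
            field_simp
          rw [this]
          exact htrace
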